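/- arXiv:2412.01594 — 2 statements merged into one kernel-verified Lean document; each statement's English description precedes it below -/
import Mathlib

section
/- Assumption B holds if and only if Assumption B̲_{{α_n}} holds for every sequence α_n ↑ 1 in [0,1); that is, [w* < +∞ and sup_{α∈[0,1)} u_α(x) < +∞ for all x ∈ X] if and only if [for every sequence α_n ∈ [0,1) with α_n ↑ 1: w* < +∞ and liminf_{n→∞} u_{α_n}(x) < +∞ for all x ∈ X]. -/
open MeasureTheory ProbabilityTheory Filter Topology Set
open scoped ENNReal NNReal

noncomputable section

/-- The nonnegative part of an extended real, as an element of `ℝ≥0∞`. -/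
def eToENN (x : EReal) : ℝ≥0∞ := if x = ⊤ then ⊤ else ENNReal.ofReal x.toReal

/-- Extended integral of an `EReal`-valued function: positive part minus negative part. -/
def eInt {Y : Type*} [MeasurableSpace Y] (μ : Measure Y) (f : Y → EReal) : EReal :=
  ((∫⁻ y, eToENN (f y) ∂μ : ℝ≥0∞) : EReal) - ((∫⁻ y, eToENN (-(f y)) ∂μ : ℝ≥0∞) : EReal)

/-- Extended sum of an `EReal`-valued series: positive part minus negative part. -/
def eSum (f : ℕ → EReal) : EReal :=
  ((∑' t, eToENN (f t) : ℝ≥0∞) : EReal) - ((∑' t, eToENN (-(f t)) : ℝ≥0∞) : EReal)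

/-- Histories of length `t`: `(X × A) ^ t × X`. -/
abbrev Hist (X A : Type*) (t : ℕ) := (Fin t → X × A) × X

/-- A (randomized, history-dependent) policy: a regular transition probability from
histories to actions, at every time epoch. -/
structure Policy (X A : Type*) [MeasurableSpace X] [MeasurableSpace A] where
  π : ∀ t : ℕ, Kernel (Hist X A t) A
  markov : ∀ t, IsMarkovKernel (π t)

/-- A Markov decision process with state space `X`, action space `A`, one-step cost `c`
(measurable and bounded below, with values in `(-∞, +∞]`) and transition probability `q`. -/
structure MDP (X A : Type*) [MeasurableSpace X] [MeasurableSpace A] where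
  c : X → A → EReal
  q : Kernel (X × A) X
  markov : IsMarkovKernel q
  c_meas : Measurable fun p : X × A => c p.1 p.2
  c_ne_bot : ∃ K : ℝ, ∀ x a, (K : EReal) ≤ c x a

variable {X A : Type*} [MeasurableSpace X] [MeasurableSpace A]

/-- The deterministic policy given by a measurable map `φ : X → A` applied to the current state. -/
def detPolicy (φ : X → A) (hφ : Measurable φ) : Policy X A :=
  ⟨fun t => Kernel.deterministic (fun h : Hist X A t => φ h.2) (hφ.comp measurable_snd),
   fun _ => by infer_instance⟩

/-- The distribution `P_x^π` of the history `h_t`, constructed recursively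
(Ionescu-Tulcea finite-dimensional marginals). -/
def histMeas (M : MDP X A) (p : Policy X A) (x : X) : ∀ t : ℕ, Measure (Hist X A t)
  | 0 => Measure.dirac (Fin.elim0, x)
  | (t + 1) =>
      (histMeas M p x t).bind fun h =>
        ((p.π t) h).bind fun a =>
          (M.q (h.2, a)).map fun x' => (Fin.snoc h.1 (h.2, a), x')

/-- The joint distribution of the state-action pair `(x_t, a_t)` under `P_x^π`. -/
def saMeas (M : MDP X A) (p : Policy X A) (x : X) (t : ℕ) : Measure (X × A) :=
  (histMeas M p x t).bind fun h => ((p.π t) h).map fun a => (h.2, a)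

/-- `E_x^π c(x_t, a_t)`. -/
def expCost (M : MDP X A) (p : Policy X A) (x : X) (t : ℕ) : EReal :=
  eInt (saMeas M p x t) fun sa => M.c sa.1 sa.2

/-- The expected total discounted cost `v_α^π(x) = E_x^π ∑_t α^t c(x_t, a_t)`. -/
def vDisc (M : MDP X A) (α : ℝ) (p : Policy X A) (x : X) : EReal :=
  eSum fun t => ((α ^ t : ℝ) : EReal) * expCost M p x t

/-- The finite-horizon expected total (undiscounted) cost `v_{N,1}^π(x)`. -/
def vFin (M : MDP X A) (N : ℕ) (p : Policy X A) (x : X) : EReal :=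
  ∑ t ∈ Finset.range N, expCost M p x t

/-- The discounted value function `v_α(x) = inf_π v_α^π(x)`. -/
def vDiscOpt (M : MDP X A) (α : ℝ) (x : X) : EReal :=
  ⨅ p : Policy X A, vDisc M α p x

/-- The average cost per unit time `w^π(x)`. -/
def avgCost (M : MDP X A) (p : Policy X A) (x : X) : EReal :=
  Filter.limsup (fun N : ℕ => (((N : ℝ)⁻¹ : ℝ) : EReal) * vFin M N p x) atTop

/-- The optimal average cost `w(x) = inf_π w^π(x)`. -/
def avgOpt (M : MDP X A) (x : X) : EReal :=
  ⨅ p : Policy X A, avgCost M p x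

/-- `w* = inf_x w(x)`. -/
def wStar (M : MDP X A) : EReal := ⨅ x : X, avgOpt M x

/-- `m_α = inf_x v_α(x)`. -/
def mDisc (M : MDP X A) (α : ℝ) : EReal := ⨅ x : X, vDiscOpt M α x

/-- The discounted relative value function `u_α(x) = v_α(x) - m_α`. -/
def uDisc (M : MDP X A) (α : ℝ) (x : X) : EReal := vDiscOpt M α x - mDisc M α

/-- `w̄ = limsup_{α↑1} (1-α) m_α`. -/
def wBar (M : MDP X A) : EReal :=
  Filter.limsup (fun α : ℝ => ((1 - α : ℝ) : EReal) * mDisc M α) (𝓝[Set.Ico (0:ℝ) 1] 1)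

/-- `w̲ = liminf_{α↑1} (1-α) m_α`. -/
def wLow (M : MDP X A) : EReal :=
  Filter.liminf (fun α : ℝ => ((1 - α : ℝ) : EReal) * mDisc M α) (𝓝[Set.Ico (0:ℝ) 1] 1)

/-- `w̄_{{α_n}} = limsup_n (1-α_n) m_{α_n}`. -/
def wBarSeq (M : MDP X A) (a : ℕ → ℝ) : EReal :=
  Filter.limsup (fun n : ℕ => ((1 - a n : ℝ) : EReal) * mDisc M (a n)) atTop

/-- `w̲_{{α_n}} = liminf_n (1-α_n) m_{α_n}`. -/
def wLowSeq (M : MDP X A) (a : ℕ → ℝ) : EReal :=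
  Filter.liminf (fun n : ℕ => ((1 - a n : ℝ) : EReal) * mDisc M (a n)) atTop


section TopologicalAssumptions

variable {X A : Type*} [MetricSpace X] [TopologicalSpace.SeparableSpace X]
  [MeasurableSpace X] [BorelSpace X] [StandardBorelSpace X]
  [MetricSpace A] [TopologicalSpace.SeparableSpace A]
  [MeasurableSpace A] [BorelSpace A] [StandardBorelSpace A]

/-- Assumption W*(i): the cost `c` is `K`-inf-compact, i.e., for every nonempty compact
`K ⊆ X`, the restriction of `c` to `K × A` has compact sublevel sets. -/
def AssumptionWi (M : MDP X A) : Prop :=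
  ∀ K : Set X, K.Nonempty → IsCompact K →
    ∀ lam : ℝ, IsCompact {p : X × A | p.1 ∈ K ∧ M.c p.1 p.2 ≤ (lam : EReal)}

/-- Assumption W*(ii): the transition probability `q(·|x,a)` is weakly continuous in `(x,a)`. -/
def AssumptionWii (M : MDP X A) : Prop :=
  ∀ f : BoundedContinuousFunction X ℝ, Continuous fun p : X × A => ∫ y, f y ∂ (M.q p)

/-- Assumption S*(i): for each `x`, the function `a ↦ c(x,a)` has compact sublevel sets. -/
def AssumptionSi (M : MDP X A) : Prop :=
  ∀ x : X, ∀ lam : ℝ, IsCompact {a : A | M.c x a ≤ (lam : EReal)}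

/-- Assumption S*(ii): for each `x`, the transition probability `q(·|x,a)` is setwise
continuous in `a`. -/
def AssumptionSii (M : MDP X A) : Prop :=
  ∀ x : X, ∀ B : Set X, MeasurableSet B → Continuous fun a : A => M.q (x, a) B

end TopologicalAssumptions

section Aux

variable {X A : Type*} [MeasurableSpace X] [MeasurableSpace A]

lemma eToENN_nonpos {x : EReal} (h : x ≤ 0) : eToENN x = 0 := by
  have hx : x ≠ ⊤ := by
    rintro rfl
    simp at h
  rw [eToENN, if_neg hx, ENNReal.ofReal_eq_zero]
  induction x with
  | bot => simp
  | coe r => exact_mod_cast h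
  | top => exact absurd rfl hx

lemma eToENN_coe (r : ℝ) : eToENN (r : EReal) = ENNReal.ofReal r := by
  rw [eToENN, if_neg (EReal.coe_ne_top r), EReal.toReal_coe]

lemma eToENN_mono {x y : EReal} (h : x ≤ y) : eToENN x ≤ eToENN y := by
  by_cases hy : y = ⊤
  · simp [eToENN, hy]
  rcases le_or_gt x 0 with hx0 | hx0
  · simp [eToENN_nonpos hx0]
  have hx : x ≠ ⊤ := fun hx => hy (top_le_iff.1 (hx ▸ h))
  have hxb : x ≠ ⊥ := fun hb => by simp [hb] at hx0
  rw [eToENN, eToENN, if_neg hx, if_neg hy]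
  exact ENNReal.ofReal_le_ofReal (EReal.toReal_le_toReal h hxb hy)

lemma measure_map_univ_le {Y Z : Type*} [MeasurableSpace Y] [MeasurableSpace Z]
    (μ : MeasureTheory.Measure Y) (f : Y → Z) (hμ : μ Set.univ ≤ 1) :
    μ.map f Set.univ ≤ 1 := by
  by_cases h : AEMeasurable f μ
  · rw [MeasureTheory.Measure.map_apply_of_aemeasurable h MeasurableSet.univ]
    simpa using hμ
  · rw [MeasureTheory.Measure.map_of_not_aemeasurable h]
    simp

lemma measure_bind_univ_le {Y Z : Type*} [MeasurableSpace Y] [MeasurableSpace Z]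
    (μ : MeasureTheory.Measure Y) (f : Y → MeasureTheory.Measure Z) (hμ : μ Set.univ ≤ 1)
    (hf : ∀ y, f y Set.univ ≤ 1) : μ.bind f Set.univ ≤ 1 := by
  by_cases h : AEMeasurable f μ
  · rw [MeasureTheory.Measure.bind, MeasureTheory.Measure.join_apply MeasurableSet.univ,
      MeasureTheory.lintegral_map' (MeasureTheory.Measure.measurable_coe MeasurableSet.univ).aemeasurable h]
    calc ∫⁻ y, f y Set.univ ∂μ ≤ ∫⁻ _, 1 ∂μ := MeasureTheory.lintegral_mono hf
      _ = μ Set.univ := by simp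
      _ ≤ 1 := hμ
  · rw [MeasureTheory.Measure.bind, MeasureTheory.Measure.map_of_not_aemeasurable h,
      MeasureTheory.Measure.join_zero]
    simp

lemma histMeas_univ_le (M : MDP X A) (p : Policy X A) (x : X) (t : ℕ) :
    histMeas M p x t Set.univ ≤ 1 := by
  induction t with
  | zero => simp [histMeas]
  | succ t ih =>
    rw [histMeas]
    refine measure_bind_univ_le _ _ ih fun h => ?_
    refine measure_bind_univ_le _ _ ?_ fun a => ?_
    · haveI := p.markov t
      simp
    · refine measure_map_univ_le _ _ ?_
      haveI := M.markov
      simp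

lemma saMeas_univ_le (M : MDP X A) (p : Policy X A) (x : X) (t : ℕ) :
    saMeas M p x t Set.univ ≤ 1 := by
  rw [saMeas]
  refine measure_bind_univ_le _ _ (histMeas_univ_le M p x t) fun h => ?_
  refine measure_map_univ_le _ _ ?_
  haveI := p.markov t
  simp

variable {M : MDP X A} {K : ℝ}

lemma expCost_ge (hK : ∀ x a, (K : EReal) ≤ M.c x a) (hK0 : K ≤ 0)
    (p : Policy X A) (x : X) (t : ℕ) : (K : EReal) ≤ expCost M p x t := by
  rw [expCost, eInt]
  set μ := saMeas M p x t
  have hQ : (∫⁻ sa, eToENN (-(M.c sa.1 sa.2)) ∂μ) ≤ ENNReal.ofReal (-K) := by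
    calc (∫⁻ sa, eToENN (-(M.c sa.1 sa.2)) ∂μ)
        ≤ ∫⁻ _, ENNReal.ofReal (-K) ∂μ := by
          refine MeasureTheory.lintegral_mono fun sa => ?_
          have h1 : -(M.c sa.1 sa.2) ≤ ((-K : ℝ) : EReal) := by
            rw [EReal.coe_neg]
            exact EReal.neg_le_neg_iff.2 (hK _ _)
          calc eToENN (-(M.c sa.1 sa.2)) ≤ eToENN ((-K : ℝ) : EReal) := eToENN_mono h1
            _ = ENNReal.ofReal (-K) := eToENN_coe _
      _ = ENNReal.ofReal (-K) * μ Set.univ := MeasureTheory.lintegral_const _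
      _ ≤ ENNReal.ofReal (-K) * 1 := mul_le_mul_right (saMeas_univ_le M p x t) _
      _ = ENNReal.ofReal (-K) := mul_one _
  have hcoe : ((ENNReal.ofReal (-K) : ℝ≥0∞) : EReal) = ((-K : ℝ) : EReal) := by
    rw [EReal.coe_ennreal_ofReal, max_eq_left (by linarith : (0:ℝ) ≤ -K)]
  calc (K : EReal) = -(((ENNReal.ofReal (-K) : ℝ≥0∞)) : EReal) := by
        rw [hcoe, ← EReal.coe_neg, neg_neg]
    _ ≤ -((∫⁻ sa, eToENN (-(M.c sa.1 sa.2)) ∂μ : ℝ≥0∞) : EReal) :=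
        EReal.neg_le_neg_iff.2 (EReal.coe_ennreal_le_coe_ennreal_iff.2 hQ)
    _ ≤ ((∫⁻ sa, eToENN (M.c sa.1 sa.2) ∂μ : ℝ≥0∞) : EReal)
        - ((∫⁻ sa, eToENN (-(M.c sa.1 sa.2)) ∂μ : ℝ≥0∞) : EReal) := by
        rw [sub_eq_add_neg]
        nth_rewrite 1 [← zero_add (-((∫⁻ sa, eToENN (-(M.c sa.1 sa.2)) ∂μ : ℝ≥0∞) : EReal))]
        exact add_le_add_left (EReal.coe_ennreal_nonneg _) _

end Aux
section Aux2

variable {X A : Type*} [MeasurableSpace X] [MeasurableSpace A] {M : MDP X A} {K : ℝ}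

/-- positive part of the discounted sum -/
def pPart (M : MDP X A) (α : ℝ) (p : Policy X A) (x : X) : ℝ≥0∞ :=
  ∑' t, eToENN (((α ^ t : ℝ) : EReal) * expCost M p x t)

lemma vDisc_le_pPart (α : ℝ) (p : Policy X A) (x : X) :
    vDisc M α p x ≤ (pPart M α p x : EReal) := by
  rw [vDisc, eSum]
  have h := EReal.sub_le_sub (le_refl ((pPart M α p x : ℝ≥0∞) : EReal))
    (EReal.coe_ennreal_nonneg (∑' t, eToENN (-(((α ^ t : ℝ) : EReal) * expCost M p x t))))
  simpa [pPart] using h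

lemma qPart_le (hK : ∀ x a, (K : EReal) ≤ M.c x a) (hK0 : K ≤ 0)
    {α : ℝ} (hα0 : 0 ≤ α) (hα1 : α < 1) (p : Policy X A) (x : X) :
    (∑' t, eToENN (-(((α ^ t : ℝ) : EReal) * expCost M p x t)))
      ≤ ENNReal.ofReal ((1 - α)⁻¹ * (-K)) := by
  have hsummable : Summable (fun t : ℕ => α ^ t * (-K)) :=
    (summable_geometric_of_lt_one hα0 hα1).mul_right _
  have hterm : ∀ t : ℕ, eToENN (-(((α ^ t : ℝ) : EReal) * expCost M p x t))
      ≤ ENNReal.ofReal (α ^ t * (-K)) := by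
    intro t
    have h1 : ((α ^ t : ℝ) : EReal) * (K : EReal) ≤ ((α ^ t : ℝ) : EReal) * expCost M p x t :=
      mul_le_mul_of_nonneg_left (expCost_ge hK hK0 p x t)
        (by exact_mod_cast pow_nonneg hα0 t)
    have h2 : -(((α ^ t : ℝ) : EReal) * expCost M p x t) ≤ ((α ^ t * (-K) : ℝ) : EReal) := by
      have : -(((α ^ t : ℝ) : EReal) * expCost M p x t) ≤ -(((α ^ t : ℝ) : EReal) * (K : EReal)) :=
        EReal.neg_le_neg_iff.2 h1
      calc -(((α ^ t : ℝ) : EReal) * expCost M p x t)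
          ≤ -(((α ^ t : ℝ) : EReal) * (K : EReal)) := this
        _ = ((α ^ t * (-K) : ℝ) : EReal) := by
            rw [← EReal.coe_mul, ← EReal.coe_neg]
            norm_num
    calc eToENN (-(((α ^ t : ℝ) : EReal) * expCost M p x t))
        ≤ eToENN ((α ^ t * (-K) : ℝ) : EReal) := eToENN_mono h2
      _ = ENNReal.ofReal (α ^ t * (-K)) := eToENN_coe _
  calc (∑' t, eToENN (-(((α ^ t : ℝ) : EReal) * expCost M p x t)))
      ≤ ∑' t, ENNReal.ofReal (α ^ t * (-K)) := ENNReal.tsum_le_tsum hterm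
    _ = ENNReal.ofReal (∑' t : ℕ, α ^ t * (-K)) :=
        (ENNReal.ofReal_tsum_of_nonneg
          (fun t => mul_nonneg (pow_nonneg hα0 t) (by linarith)) hsummable).symm
    _ = ENNReal.ofReal ((1 - α)⁻¹ * (-K)) := by
        rw [tsum_mul_right, tsum_geometric_of_lt_one hα0 hα1]

lemma vDisc_ge (hK : ∀ x a, (K : EReal) ≤ M.c x a) (hK0 : K ≤ 0)
    {α : ℝ} (hα0 : 0 ≤ α) (hα1 : α < 1) (p : Policy X A) (x : X) :
    ((-((1 - α)⁻¹ * (-K)) : ℝ) : EReal) ≤ vDisc M α p x := by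
  have hQ := qPart_le hK hK0 hα0 hα1 p x
  have hC : (0:ℝ) ≤ (1 - α)⁻¹ * (-K) :=
    mul_nonneg (inv_nonneg.2 (by linarith)) (by linarith)
  have hcoe : ((ENNReal.ofReal ((1 - α)⁻¹ * (-K)) : ℝ≥0∞) : EReal)
      = (((1 - α)⁻¹ * (-K) : ℝ) : EReal) := by
    rw [EReal.coe_ennreal_ofReal, max_eq_left hC]
  rw [vDisc, eSum]
  calc ((-((1 - α)⁻¹ * (-K)) : ℝ) : EReal)
      = -(((ENNReal.ofReal ((1 - α)⁻¹ * (-K)) : ℝ≥0∞)) : EReal) := by rw [hcoe, EReal.coe_neg]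
    _ ≤ -((∑' t, eToENN (-(((α ^ t : ℝ) : EReal) * expCost M p x t)) : ℝ≥0∞) : EReal) :=
        EReal.neg_le_neg_iff.2 (EReal.coe_ennreal_le_coe_ennreal_iff.2 hQ)
    _ ≤ _ := by
        rw [sub_eq_add_neg]
        nth_rewrite 1 [← zero_add (-((∑' t, eToENN (-(((α ^ t : ℝ) : EReal) * expCost M p x t)) : ℝ≥0∞) : EReal))]
        exact add_le_add_left (EReal.coe_ennreal_nonneg _) _

lemma mDisc_ge (hK : ∀ x a, (K : EReal) ≤ M.c x a) (hK0 : K ≤ 0)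
    {α : ℝ} (hα0 : 0 ≤ α) (hα1 : α < 1) :
    ((-((1 - α)⁻¹ * (-K)) : ℝ) : EReal) ≤ mDisc M α :=
  le_iInf fun x => le_iInf fun p => vDisc_ge hK hK0 hα0 hα1 p x

lemma pPart_mono {α γ : ℝ} (hα0 : 0 ≤ α) (hαγ : α ≤ γ) (p : Policy X A) (x : X) :
    pPart M α p x ≤ pPart M γ p x := by
  refine ENNReal.tsum_le_tsum fun t => ?_
  rcases le_or_gt (expCost M p x t) 0 with he | he
  · have : ((α ^ t : ℝ) : EReal) * expCost M p x t ≤ 0 :=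
      mul_nonpos_of_nonneg_of_nonpos (by exact_mod_cast pow_nonneg hα0 t) he
    rw [eToENN_nonpos this]
    exact zero_le
  · refine eToENN_mono ?_
    refine mul_le_mul_of_nonneg_right ?_ he.le
    exact_mod_cast pow_le_pow_left₀ hα0 hαγ t

lemma pPart_le_vDisc_add (hK : ∀ x a, (K : EReal) ≤ M.c x a) (hK0 : K ≤ 0)
    {γ : ℝ} (hγ0 : 0 ≤ γ) (hγ1 : γ < 1) (p : Policy X A) (x : X) :
    (pPart M γ p x : EReal) ≤ vDisc M γ p x + (((1 - γ)⁻¹ * (-K) : ℝ) : EReal) := by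
  have hQ := qPart_le hK hK0 hγ0 hγ1 p x
  have hC : (0:ℝ) ≤ (1 - γ)⁻¹ * (-K) :=
    mul_nonneg (inv_nonneg.2 (by linarith)) (by linarith)
  have hcoe : ((ENNReal.ofReal ((1 - γ)⁻¹ * (-K)) : ℝ≥0∞) : EReal)
      = (((1 - γ)⁻¹ * (-K) : ℝ) : EReal) := by
    rw [EReal.coe_ennreal_ofReal, max_eq_left hC]
  have h1 : (pPart M γ p x : EReal) - (((1 - γ)⁻¹ * (-K) : ℝ) : EReal) ≤ vDisc M γ p x := by
    rw [vDisc, eSum]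
    refine EReal.sub_le_sub (le_refl _) ?_
    rw [← hcoe]
    exact EReal.coe_ennreal_le_coe_ennreal_iff.2 hQ
  calc (pPart M γ p x : EReal)
      = (pPart M γ p x : EReal) - (((1 - γ)⁻¹ * (-K) : ℝ) : EReal)
          + (((1 - γ)⁻¹ * (-K) : ℝ) : EReal) := (EReal.sub_add_cancel).symm
    _ ≤ vDisc M γ p x + (((1 - γ)⁻¹ * (-K) : ℝ) : EReal) := add_le_add_left h1 _

end Aux2
section Aux3

variable {X A : Type*} [MeasurableSpace X] [MeasurableSpace A] {M : MDP X A} {K : ℝ}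

lemma ereal_sum_ne_bot {s : Finset ℕ} {f : ℕ → EReal} (h : ∀ i ∈ s, f i ≠ ⊥) :
    (∑ i ∈ s, f i) ≠ ⊥ := by
  induction s using Finset.cons_induction with
  | empty => simp
  | cons i s hi ih =>
    rw [Finset.sum_cons]
    rw [ne_eq, EReal.add_eq_bot_iff]
    push_neg
    exact ⟨h i (Finset.mem_cons_self i s), ih fun j hj => h j (Finset.mem_cons_of_mem hj)⟩

lemma ereal_sum_eq_top {s : Finset ℕ} {f : ℕ → EReal} (h : ∀ i ∈ s, f i ≠ ⊥)
    {i : ℕ} (hi : i ∈ s) (htop : f i = ⊤) : (∑ j ∈ s, f j) = ⊤ := by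
  rw [← Finset.add_sum_erase s f hi, htop]
  exact EReal.top_add_of_ne_bot (ereal_sum_ne_bot fun j hj => h j (Finset.mem_of_mem_erase hj))

lemma ereal_coe_finset_sum {s : Finset ℕ} {f : ℕ → ℝ} :
    ((∑ i ∈ s, f i : ℝ) : EReal) = ∑ i ∈ s, ((f i : EReal)) :=
  map_sum (⟨⟨(Real.toEReal), EReal.coe_zero⟩, EReal.coe_add⟩ : ℝ →+ EReal) f s

/-- Tauberian-type lemma: finite optimal average cost implies finite `m_α`. -/
lemma mDisc_lt_top (hK : ∀ x a, (K : EReal) ≤ M.c x a) (hK0 : K ≤ 0)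
    (hw : wStar M < ⊤) {α : ℝ} (hα0 : 0 ≤ α) (hα1 : α < 1) : mDisc M α < ⊤ := by
  -- extract a state and a policy with finite average cost
  obtain ⟨x₀, hx₀⟩ := iInf_lt_iff.1 hw
  obtain ⟨p, hp⟩ := iInf_lt_iff.1 hx₀
  obtain ⟨C, hC1, -⟩ := EReal.lt_iff_exists_real_btwn.1 hp
  have hev : ∀ᶠ N : ℕ in Filter.atTop,
      (((N : ℝ)⁻¹ : ℝ) : EReal) * vFin M N p x₀ < (C : EReal) :=
    Filter.eventually_lt_of_limsup_lt hC1
  obtain ⟨N₀, hN₀⟩ := Filter.eventually_atTop.1 hev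
  set e := expCost M p x₀ with he_def
  have he_ge : ∀ t, (K : EReal) ≤ e t := fun t => expCost_ge hK hK0 p x₀ t
  have he_bot : ∀ t, e t ≠ ⊥ := fun t hbot => by
    have := he_ge t; rw [hbot] at this; exact absurd this (by simp)
  -- all one-step expected costs are finite
  have he_top : ∀ t, e t ≠ ⊤ := by
    intro t htop
    set N := max (t + 1) N₀ with hN
    have hNt : t ∈ Finset.range N := Finset.mem_range.2 (lt_of_lt_of_le (Nat.lt_succ_self t)
      (le_max_left _ _))
    have hvfin : vFin M N p x₀ = ⊤ :=
      ereal_sum_eq_top (fun j _ => he_bot j) hNt htop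
    have hNpos : (0 : ℝ) < ((N : ℝ))⁻¹ := by
      rw [inv_pos]
      exact_mod_cast lt_of_lt_of_le (Nat.succ_pos t) (le_max_left _ _)
    have := hN₀ N (le_max_right _ _)
    rw [hvfin, EReal.mul_top_of_pos (by exact_mod_cast hNpos)] at this
    exact absurd this (by simp)
  -- real versions
  set er : ℕ → ℝ := fun t => (e t).toReal with her
  have hecoe : ∀ t, e t = ((er t : ℝ) : EReal) := fun t =>
    (EReal.coe_toReal (he_top t) (he_bot t)).symm
  have her_ge : ∀ t, K ≤ er t := fun t => by
    have := he_ge t; rw [hecoe t] at this; exact_mod_cast this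
  -- partial sums grow at most linearly
  have hsum : ∀ N ≥ max N₀ 1, (∑ t ∈ Finset.range N, er t) < C * N := by
    intro N hN
    have hN1 : (1 : ℕ) ≤ N := le_trans (le_max_right _ _) hN
    have hNpos : (0 : ℝ) < (N : ℝ) := by exact_mod_cast hN1
    have h1 := hN₀ N (le_trans (le_max_left _ _) hN)
    have hvfin : vFin M N p x₀ = ((∑ t ∈ Finset.range N, er t : ℝ) : EReal) := by
      rw [vFin, ereal_coe_finset_sum]
      exact Finset.sum_congr rfl fun t _ => hecoe t
    rw [hvfin, ← EReal.coe_mul, EReal.coe_lt_coe_iff] at h1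
    calc (∑ t ∈ Finset.range N, er t) = (N : ℝ) * ((N:ℝ)⁻¹ * (∑ t ∈ Finset.range N, er t)) := by
          field_simp
      _ < (N : ℝ) * C := by
          exact mul_lt_mul_of_pos_left h1 hNpos
      _ = C * N := mul_comm _ _
  set N₁ := max N₀ 1 with hN₁
  set d : ℕ → ℝ := fun t => er t - K with hd
  have hd0 : ∀ t, 0 ≤ d t := fun t => by have := her_ge t; simp [hd]; linarith
  set D : ℝ := ∑ t ∈ Finset.range N₁, d t with hD
  set c' : ℝ := max 0 (C - K) with hc'
  -- pointwise linear bound on the one-step costs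
  have her_le : ∀ t : ℕ, er t ≤ D + c' * ((t : ℝ) + 1) := by
    intro t
    have h1 : er t ≤ K + d t := by simp [hd]
    have h2 : d t ≤ ∑ s ∈ Finset.range (t + 1), d s :=
      Finset.single_le_sum (fun s _ => hd0 s) (Finset.mem_range.2 (Nat.lt_succ_self t))
    rcases le_or_gt N₁ (t + 1) with hcase | hcase
    · have h3 : (∑ s ∈ Finset.range (t + 1), d s)
          = (∑ s ∈ Finset.range (t + 1), er s) - (t + 1) * K := by
        simp [hd, Finset.sum_sub_distrib, mul_comm]
      have h4 := hsum (t + 1) hcase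
      have h5 : (∑ s ∈ Finset.range (t + 1), d s) ≤ (C - K) * (t + 1) := by
        rw [h3]
        push_cast at h4 ⊢
        nlinarith [h4]
      have h6 : (0:ℝ) ≤ D := Finset.sum_nonneg fun s _ => hd0 s
      have h7 : (C - K) * (t+1) ≤ c' * (t+1) := by
        apply mul_le_mul_of_nonneg_right (le_max_right _ _)
        positivity
      push_cast at h5 h7 ⊢
      nlinarith [hd0 t]
    · have h3 : (∑ s ∈ Finset.range (t + 1), d s) ≤ D := by
        apply Finset.sum_le_sum_of_subset_of_nonneg
        · exact Finset.range_subset_range.2 hcase.le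
        · exact fun s _ _ => hd0 s
      have h7 : (0:ℝ) ≤ c' * (t+1) := by positivity
      push_cast at h7 ⊢
      nlinarith [hd0 t]
  -- summability of the dominating series
  have hsummable : Summable (fun t : ℕ => α ^ t * (D + c' * ((t : ℝ) + 1))) := by
    have h1 : Summable (fun t : ℕ => α ^ t * D) :=
      (summable_geometric_of_lt_one hα0 hα1).mul_right _
    have h2 : Summable (fun t : ℕ => (t : ℝ) * α ^ t) := by
      have := summable_pow_mul_geometric_of_norm_lt_one 1 (r := α)
        (by rw [Real.norm_eq_abs, abs_of_nonneg hα0]; exact hα1)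
      simpa using this
    have h3 : Summable (fun t : ℕ => α ^ t * (c' * (t + 1))) := by
      have h4 : Summable (fun t : ℕ => c' * ((t : ℝ) * α ^ t) + c' * α ^ t) :=
        ((h2.mul_left c').add ((summable_geometric_of_lt_one hα0 hα1).mul_left c'))
      refine h4.congr fun t => by ring
    refine (h1.add h3).congr fun t => by ring
  have hnn : ∀ t : ℕ, (0:ℝ) ≤ α ^ t * (D + c' * ((t : ℝ) + 1)) := by
    intro t
    have h6 : (0:ℝ) ≤ D := Finset.sum_nonneg fun s _ => hd0 s
    have : (0:ℝ) ≤ c' * (t+1) := by positivity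
    positivity
  -- the positive part of the discounted sum is finite
  have hP : pPart M α p x₀ < ⊤ := by
    have hterm : ∀ t : ℕ, eToENN (((α ^ t : ℝ) : EReal) * expCost M p x₀ t)
        ≤ ENNReal.ofReal (α ^ t * (D + c' * ((t : ℝ) + 1))) := by
      intro t
      rw [← he_def, hecoe t, ← EReal.coe_mul, eToENN_coe]
      exact ENNReal.ofReal_le_ofReal
        (mul_le_mul_of_nonneg_left (her_le t) (pow_nonneg hα0 t))
    calc pPart M α p x₀
        ≤ ∑' t : ℕ, ENNReal.ofReal (α ^ t * (D + c' * ((t : ℝ) + 1))) := by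
          simp only [pPart]
          exact ENNReal.tsum_le_tsum hterm
      _ = ENNReal.ofReal (∑' t : ℕ, α ^ t * (D + c' * ((t : ℝ) + 1))) :=
          (ENNReal.ofReal_tsum_of_nonneg hnn hsummable).symm
      _ < ⊤ := ENNReal.ofReal_lt_top
  have hv : vDisc M α p x₀ < ⊤ :=
    lt_of_le_of_lt (vDisc_le_pPart α p x₀) (by
      rw [← EReal.coe_ennreal_top, EReal.coe_ennreal_lt_coe_ennreal_iff]
      exact hP)
  calc mDisc M α ≤ vDiscOpt M α x₀ := iInf_le _ _
    _ ≤ vDisc M α p x₀ := iInf_le _ _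
    _ < ⊤ := hv

end Aux3
section Aux4

variable {X A : Type*} [MeasurableSpace X] [MeasurableSpace A] {M : MDP X A} {K : ℝ}

/-- On any interval `[0, γ]` with `v_γ(x)` finite, `u_α(x)` is uniformly bounded. -/
lemma uDisc_bdd_on_Icc (hK : ∀ x a, (K : EReal) ≤ M.c x a) (hK0 : K ≤ 0)
    {γ : ℝ} (hγ0 : 0 ≤ γ) (hγ1 : γ < 1) {x : X} (hv : vDiscOpt M γ x < ⊤) :
    ∀ α, 0 ≤ α → α ≤ γ → uDisc M α x ≤
      (((vDiscOpt M γ x).toReal + 1 + (1 - γ)⁻¹ * (-K) + (1 - γ)⁻¹ * (-K) : ℝ) : EReal) := by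
  set Cγ : ℝ := (1 - γ)⁻¹ * (-K) with hCγ
  have hvbot : ((-Cγ : ℝ) : EReal) ≤ vDiscOpt M γ x :=
    le_iInf fun p => vDisc_ge hK hK0 hγ0 hγ1 p x
  have hvne_bot : vDiscOpt M γ x ≠ ⊥ := by
    intro hb
    rw [hb, le_bot_iff] at hvbot
    exact EReal.coe_ne_bot _ hvbot
  set r : ℝ := (vDiscOpt M γ x).toReal with hrdef
  have hr : vDiscOpt M γ x = (r : EReal) := (EReal.coe_toReal hv.ne hvne_bot).symm
  obtain ⟨p, hp⟩ := iInf_lt_iff.1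
    (show vDiscOpt M γ x < ((r + 1 : ℝ) : EReal) by
      rw [hr]; exact_mod_cast lt_add_one r)
  intro α hα0 hαγ
  have hα1 : α < 1 := lt_of_le_of_lt hαγ hγ1
  have h1 : vDiscOpt M α x ≤ ((r + 1 + Cγ : ℝ) : EReal) := by
    calc vDiscOpt M α x ≤ vDisc M α p x := iInf_le _ _
      _ ≤ (pPart M α p x : EReal) := vDisc_le_pPart _ _ _
      _ ≤ (pPart M γ p x : EReal) :=
          EReal.coe_ennreal_le_coe_ennreal_iff.2 (pPart_mono hα0 hαγ p x)
      _ ≤ vDisc M γ p x + ((Cγ : ℝ) : EReal) := pPart_le_vDisc_add hK hK0 hγ0 hγ1 p x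
      _ ≤ ((r + 1 : ℝ) : EReal) + ((Cγ : ℝ) : EReal) := add_le_add_left hp.le _
      _ = ((r + 1 + Cγ : ℝ) : EReal) := by rw [← EReal.coe_add]
  have h2 : ((-Cγ : ℝ) : EReal) ≤ mDisc M α := by
    refine le_trans ?_ (mDisc_ge hK hK0 hα0 hα1)
    apply EReal.coe_le_coe_iff.2
    have hinv : (1 - α)⁻¹ ≤ (1 - γ)⁻¹ := by
      apply inv_anti₀ <;> linarith
    have := mul_le_mul_of_nonneg_right hinv (by linarith : (0:ℝ) ≤ -K)
    simp only [hCγ]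
    linarith
  calc uDisc M α x = vDiscOpt M α x - mDisc M α := rfl
    _ ≤ ((r + 1 + Cγ : ℝ) : EReal) - ((-Cγ : ℝ) : EReal) := EReal.sub_le_sub h1 h2
    _ = ((r + 1 + Cγ - -Cγ : ℝ) : EReal) := by rw [← EReal.coe_sub]
    _ = (((vDiscOpt M γ x).toReal + 1 + (1 - γ)⁻¹ * (-K) + (1 - γ)⁻¹ * (-K) : ℝ) : EReal) := by
        congr 1
        simp only [hCγ, ← hrdef]
        ring

end Aux4
section Statements

variable {X A : Type*} [MetricSpace X] [TopologicalSpace.SeparableSpace X]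
  [MeasurableSpace X] [BorelSpace X] [StandardBorelSpace X]
  [MetricSpace A] [TopologicalSpace.SeparableSpace A]
  [MeasurableSpace A] [BorelSpace A] [StandardBorelSpace A]

/-- Assumption B holds if and only if Assumption B̲_{{α_n}} holds for
every sequence `α_n ↑ 1` in `[0,1)`: `[w* < +∞ and sup_{α ∈ [0,1)} u_α(x) < +∞ for all
x]` iff `[for every sequence α_n ∈ [0,1) with α_n ↑ 1 : w* < +∞ and
liminf_n u_{α_n}(x) < +∞ for all x]`. -/
theorem statement8 (M : MDP X A) :
    (wStar M < ⊤ ∧ ∀ x : X, (⨆ α ∈ Set.Ico (0 : ℝ) 1, uDisc M α x) < ⊤)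
    ↔ (∀ a : ℕ → ℝ, (∀ n, a n ∈ Set.Ico (0 : ℝ) 1) → Monotone a →
        Tendsto a atTop (𝓝 (1 : ℝ)) →
        wStar M < ⊤ ∧ ∀ x : X, Filter.liminf (fun n => uDisc M (a n) x) atTop < ⊤) := by
  constructor
  · rintro ⟨hw, hsup⟩ a ha _ _
    refine ⟨hw, fun x => ?_⟩
    refine lt_of_le_of_lt ?_ (hsup x)
    exact liminf_le_of_frequently_le
      (Filter.Frequently.of_forall fun n => le_biSup (fun α => uDisc M α x) (ha n))
  · intro h
    obtain ⟨K', hK'⟩ := M.c_ne_bot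
    set K : ℝ := min K' 0 with hKdef
    have hK : ∀ x a, (K : EReal) ≤ M.c x a := fun x a =>
      le_trans (by exact_mod_cast min_le_left K' 0) (hK' x a)
    have hK0 : K ≤ 0 := min_le_right _ _
    -- the base sequence 1 - 1/(n+1)
    set a0 : ℕ → ℝ := fun n => 1 - 1 / ((n : ℝ) + 1) with ha0
    have ha0mem : ∀ n, a0 n ∈ Set.Ico (0:ℝ) 1 := by
      intro n
      constructor
      · have h1 : 1 / ((n:ℝ) + 1) ≤ 1 := by
          rw [div_le_one (by positivity)]
          have hn0 : (0:ℝ) ≤ (n:ℝ) := Nat.cast_nonneg n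
          linarith
        simp only [ha0]; linarith
      · have h2 : (0:ℝ) < 1 / ((n:ℝ) + 1) := by positivity
        simp only [ha0]; linarith
    have ha0mono : Monotone a0 := by
      intro m n hmn
      have h1 : 1 / ((n:ℝ) + 1) ≤ 1 / ((m:ℝ) + 1) := by
        apply one_div_le_one_div_of_le (by positivity)
        have : (m:ℝ) ≤ (n:ℝ) := by exact_mod_cast hmn
        linarith
      simp only [ha0]; linarith
    have ha0tend : Filter.Tendsto a0 Filter.atTop (𝓝 (1:ℝ)) := by
      have h1 := tendsto_one_div_add_atTop_nhds_zero_nat (𝕜 := ℝ)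
      have h2 := (tendsto_const_nhds :
        Filter.Tendsto (fun _ : ℕ => (1:ℝ)) Filter.atTop (𝓝 1)).sub h1
      simpa [ha0] using h2
    obtain ⟨hw, hli⟩ := h a0 ha0mem ha0mono ha0tend
    refine ⟨hw, fun x => ?_⟩
    by_contra hsup
    rw [not_lt, top_le_iff] at hsup
    -- Step A: discount factors with finite value exist arbitrarily close to 1
    have stepA : ∀ β : ℝ, β < 1 → ∃ γ, β ≤ γ ∧ 0 ≤ γ ∧ γ < 1 ∧ vDiscOpt M γ x < ⊤ := by
      intro β hβ
      have hfreq : ∃ᶠ n in Filter.atTop, uDisc M (a0 n) x < ⊤ :=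
        Filter.frequently_lt_of_liminf_lt (h := hli x)
      have hev2 : ∀ᶠ n : ℕ in Filter.atTop, β ≤ a0 n :=
        ha0tend.eventually (eventually_ge_nhds hβ)
      obtain ⟨n, hn1, hn2⟩ := (hfreq.and_eventually hev2).exists
      refine ⟨a0 n, hn2, (ha0mem n).1, (ha0mem n).2, ?_⟩
      have hm_top : mDisc M (a0 n) < ⊤ := mDisc_lt_top hK hK0 hw (ha0mem n).1 (ha0mem n).2
      have hm_bot : mDisc M (a0 n) ≠ ⊥ := by
        have h3 := mDisc_ge hK hK0 (ha0mem n).1 (ha0mem n).2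
        intro hb; rw [hb, le_bot_iff] at h3; exact EReal.coe_ne_bot _ h3
      by_contra hv
      rw [not_lt, top_le_iff] at hv
      have h4 : uDisc M (a0 n) x = ⊤ := by
        rw [uDisc, hv, ← EReal.coe_toReal hm_top.ne hm_bot, EReal.top_sub_coe]
      rw [h4] at hn1
      exact absurd hn1 (lt_irrefl _)
    -- Step B: values of u exceeding n exist arbitrarily close to 1
    have stepB : ∀ β : ℝ, 0 ≤ β → β < 1 → ∀ n : ℕ,
        ∃ α, β < α ∧ α < 1 ∧ (((n:ℝ)) : EReal) ≤ uDisc M α x := by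
      intro β hβ0 hβ1 n
      by_contra hno
      push_neg at hno
      obtain ⟨γ, hγβ, hγ0, hγ1, hγv⟩ := stepA β hβ1
      set R : ℝ := (vDiscOpt M γ x).toReal + 1 + (1 - γ)⁻¹ * (-K) + (1 - γ)⁻¹ * (-K) with hR
      have hbd := uDisc_bdd_on_Icc hK hK0 hγ0 hγ1 hγv
      have hall : ∀ α ∈ Set.Ico (0:ℝ) 1,
          uDisc M α x ≤ max ((R : ℝ) : EReal) (((n:ℝ)) : EReal) := by
        intro α hα
        rcases le_or_gt α γ with hle | hlt
        · exact le_trans (hbd α hα.1 hle) (le_max_left _ _)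
        · exact le_trans (hno α (lt_of_le_of_lt hγβ hlt) hα.2).le (le_max_right _ _)
      have hle2 : (⨆ α ∈ Set.Ico (0:ℝ) 1, uDisc M α x)
          ≤ max ((R : ℝ) : EReal) (((n:ℝ)) : EReal) := iSup₂_le hall
      rw [hsup] at hle2
      have hfin : max ((R : ℝ) : EReal) (((n:ℝ)) : EReal) < ⊤ :=
        max_lt (EReal.coe_lt_top _) (EReal.coe_lt_top _)
      exact absurd (lt_of_le_of_lt hle2 hfin) (lt_irrefl _)
    -- Step C: build a monotone sequence tending to 1 on which u blows up
    choose! F hF1 hF2 hF3 using stepB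
    set b : ℕ → ℝ := fun n =>
      Nat.rec (F 0 0) (fun n ih => F (max ih (1 - 1/((n:ℝ)+2))) (n+1)) n with hb
    have hb0 : b 0 = F 0 0 := rfl
    have hbs : ∀ n, b (n+1) = F (max (b n) (1 - 1/((n:ℝ)+2))) (n+1) := fun n => rfl
    have hinv : ∀ n, b n ∈ Set.Ico (0:ℝ) 1 ∧ 1 - 1/((n:ℝ)+1) < b n ∧
        (((n:ℝ)) : EReal) ≤ uDisc M (b n) x := by
      intro n
      induction n with
      | zero =>
        have h1 := hF1 0 (le_refl 0) one_pos 0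
        have h2 := hF2 0 (le_refl 0) one_pos 0
        have h3 := hF3 0 (le_refl 0) one_pos 0
        rw [hb0] at *
        refine ⟨⟨h1.le, h2⟩, by norm_num; exact h1, by exact_mod_cast h3⟩
      | succ n ih =>
        obtain ⟨⟨hbn0, hbn1⟩, hbnlow, hbnu⟩ := ih
        set β : ℝ := max (b n) (1 - 1/((n:ℝ)+2)) with hβ
        have hβ0 : 0 ≤ β := le_trans hbn0 (le_max_left _ _)
        have hβ1 : β < 1 := by
          apply max_lt hbn1
          have : (0:ℝ) < 1/((n:ℝ)+2) := by positivity
          linarith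
        have h1 := hF1 β hβ0 hβ1 (n+1)
        have h2 := hF2 β hβ0 hβ1 (n+1)
        have h3 := hF3 β hβ0 hβ1 (n+1)
        rw [← hbs n] at h1 h2 h3
        refine ⟨⟨le_trans hβ0 h1.le, h2⟩, ?_, ?_⟩
        · have h5 : 1 - 1/((n:ℝ)+2) ≤ β := le_max_right _ _
          push_cast
          push_cast at h5
          ring_nf
          ring_nf at h5 h1
          linarith [h1]
        · push_cast
          push_cast at h3
          exact h3
    have hbmem : ∀ n, b n ∈ Set.Ico (0:ℝ) 1 := fun n => (hinv n).1
    have hbmono : Monotone b := by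
      apply monotone_nat_of_le_succ
      intro n
      have h1 := hF1 (max (b n) (1 - 1/((n:ℝ)+2)))
        (le_trans (hbmem n).1 (le_max_left _ _))
        (by
          apply max_lt (hbmem n).2
          have : (0:ℝ) < 1/((n:ℝ)+2) := by positivity
          linarith) (n+1)
      rw [← hbs n] at h1
      exact le_trans (le_max_left _ _) h1.le
    have hbtend : Filter.Tendsto b Filter.atTop (𝓝 (1:ℝ)) := by
      refine tendsto_of_tendsto_of_tendsto_of_le_of_le ha0tend
        (tendsto_const_nhds) (fun n => ?_) (fun n => (hbmem n).2.le)
      simpa [ha0, one_div] using (hinv n).2.1.le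
    obtain ⟨-, hli2⟩ := h b hbmem hbmono hbtend
    have htopliminf : Filter.liminf (fun n : ℕ => (((n:ℝ)) : EReal)) Filter.atTop = ⊤ := by
      refine Filter.Tendsto.liminf_eq ?_
      rw [EReal.tendsto_nhds_top_iff_real]
      intro z
      filter_upwards [Filter.eventually_gt_atTop ⌈z⌉₊] with n hn
      exact_mod_cast lt_of_le_of_lt (Nat.le_ceil z) (by exact_mod_cast hn)
    have hge : Filter.liminf (fun n : ℕ => (((n:ℝ)) : EReal)) Filter.atTop
        ≤ Filter.liminf (fun n => uDisc M (b n) x) Filter.atTop :=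
      Filter.liminf_le_liminf (Filter.Eventually.of_forall fun n => (hinv n).2.2)
    rw [htopliminf] at hge
    have := hli2 x
    rw [lt_iff_not_ge] at this
    exact this hge

end Statements


end
end

section
/- Let a : ℕ → [0,+∞]. Then limsup_{α→1⁻} (1−α) Σ_{t=0}^{∞} α^t a_t ≤ limsup_{N→∞} (1/N) Σ_{t=0}^{N−1} a_t, where the left-hand limsup is taken along the filter of α ∈ [0,1) tending to 1, all sums and products are in the extended nonnegative reals, and Σ_{t=0}^{∞} α^t a_t denotes the (possibly infinite) sum of the series. -/
open Filter Topology Set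
open scoped ENNReal

private lemma geom_tail (r : ℝ≥0∞) (t : ℕ) :
    ∑' n : ℕ, (if t ≤ n then r ^ n else 0) = r ^ t * (1 - r)⁻¹ := by
  have hinj : Function.Injective (fun m : ℕ => t + m) := fun a b h => by
    simpa using h
  have hrange : Set.range (fun m : ℕ => t + m) = {n : ℕ | t ≤ n} := by
    ext n; constructor
    · rintro ⟨m, rfl⟩; exact Nat.le_add_right _ _
    · intro hn
      have hn' : t ≤ n := hn
      exact ⟨n - t, by show t + (n - t) = n; omega⟩
  calc ∑' n : ℕ, (if t ≤ n then r ^ n else 0)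
      = ∑' n : ℕ, Set.indicator {n : ℕ | t ≤ n} (fun n => r ^ n) n := by
        refine tsum_congr fun n => ?_
        by_cases h : t ≤ n <;> simp [Set.indicator, h]
    _ = ∑' n : {n : ℕ | t ≤ n}, r ^ (n : ℕ) := (tsum_subtype _ _).symm
    _ = ∑' m : ℕ, r ^ (t + m) := by
        rw [← hrange, tsum_range (fun n : ℕ => r ^ n) hinj]
    _ = r ^ t * (1 - r)⁻¹ := by
        simp_rw [pow_add]
        rw [ENNReal.tsum_mul_left, ENNReal.tsum_geometric]

private lemma abel_id (r : ℝ≥0∞) (hr : r < 1) (a : ℕ → ℝ≥0∞) :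
    ∑' t : ℕ, r ^ t * a t
      = (1 - r) * ∑' n : ℕ, r ^ n * ∑ t ∈ Finset.range (n + 1), a t := by
  have h1 : (1 - r) ≠ 0 := by rw [Ne, tsub_eq_zero_iff_le]; exact not_le.mpr hr
  have h2 : (1 - r) ≠ ∞ := (tsub_le_self.trans_lt ENNReal.one_lt_top).ne
  calc ∑' t : ℕ, r ^ t * a t
      = ∑' t : ℕ, (1 - r) * ((∑' n : ℕ, if t ≤ n then r ^ n else 0) * a t) := by
        refine tsum_congr fun t => ?_
        have hc : (1 - r) * (r ^ t * (1 - r)⁻¹) = r ^ t := by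
          rw [mul_comm (r ^ t), ← mul_assoc, ENNReal.mul_inv_cancel h1 h2, one_mul]
        rw [geom_tail, ← mul_assoc, hc]
    _ = (1 - r) * ∑' t : ℕ, (∑' n : ℕ, if t ≤ n then r ^ n else 0) * a t :=
        ENNReal.tsum_mul_left
    _ = (1 - r) * ∑' t : ℕ, ∑' n : ℕ, (if t ≤ n then r ^ n else 0) * a t := by
        refine congrArg _ (tsum_congr fun t => ?_)
        exact ENNReal.tsum_mul_right.symm
    _ = (1 - r) * ∑' n : ℕ, ∑' t : ℕ, (if t ≤ n then r ^ n else 0) * a t := by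
        rw [ENNReal.tsum_comm]
    _ = (1 - r) * ∑' n : ℕ, r ^ n * ∑ t ∈ Finset.range (n + 1), a t := by
        refine congrArg _ (tsum_congr fun n => ?_)
        have key : ∀ t : ℕ, (if t ≤ n then r ^ n else 0) * a t
            = r ^ n * (if t ∈ Finset.range (n + 1) then a t else 0) := by
          intro t
          by_cases h : t ≤ n <;> simp [h, Finset.mem_range, Nat.lt_succ_iff]
        simp_rw [key]
        rw [ENNReal.tsum_mul_left]
        congr 1
        rw [tsum_eq_sum (s := Finset.range (n + 1)) (fun t ht => by simp [ht])]
        exact Finset.sum_congr rfl fun t ht => by simp [ht]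

private lemma geom_deriv (r : ℝ≥0∞) (hr : r < 1) :
    ∑' n : ℕ, r ^ n * ((n : ℝ≥0∞) + 1) = (1 - r)⁻¹ * (1 - r)⁻¹ := by
  have h1 : (1 - r) ≠ 0 := by rw [Ne, tsub_eq_zero_iff_le]; exact not_le.mpr hr
  have h2 : (1 - r) ≠ ∞ := (tsub_le_self.trans_lt ENNReal.one_lt_top).ne
  have h := abel_id r hr (fun _ => 1)
  simp only [mul_one, Finset.sum_const, Finset.card_range, nsmul_eq_mul,
    Nat.cast_add, Nat.cast_one, ENNReal.tsum_geometric] at h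
  calc ∑' n : ℕ, r ^ n * ((n : ℝ≥0∞) + 1)
      = (1 - r)⁻¹ * (1 - r) * ∑' n : ℕ, r ^ n * ((n : ℝ≥0∞) + 1) := by
        rw [ENNReal.inv_mul_cancel h1 h2, one_mul]
    _ = (1 - r)⁻¹ * ((1 - r) * ∑' n : ℕ, r ^ n * ((n : ℝ≥0∞) + 1)) := mul_assoc _ _ _
    _ = (1 - r)⁻¹ * (1 - r)⁻¹ := by rw [← h]

/-- Abelian/Tauberian inequality. For any `a : ℕ → [0,+∞]`, the
upper Abel limit `limsup_{α→1⁻, α ∈ [0,1)} (1-α) ∑_t α^t a_t` is bounded above by the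
upper Cesàro limit `limsup_N (1/N) ∑_{t<N} a_t`, all sums and products being taken in
the extended nonnegative reals. -/
theorem statement13 (a : ℕ → ℝ≥0∞) :
    Filter.limsup
        (fun α : ℝ => ENNReal.ofReal (1 - α) * ∑' t : ℕ, ENNReal.ofReal (α ^ t) * a t)
        (𝓝[Set.Ico (0 : ℝ) 1] 1)
      ≤ Filter.limsup
          (fun N : ℕ => ((N : ℝ≥0∞))⁻¹ * ∑ t ∈ Finset.range N, a t) atTop := by
  refine le_of_forall_gt_imp_ge_of_dense fun c hc => ?_
  obtain ⟨c', hLc', hc'c⟩ := exists_between hc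
  have hc'top : c' ≠ ∞ := (hc'c.trans_le le_top).ne
  have hev : ∀ᶠ N : ℕ in atTop, ((N : ℝ≥0∞))⁻¹ * ∑ t ∈ Finset.range N, a t < c' :=
    Filter.eventually_lt_of_limsup_lt hLc'
  obtain ⟨N1, hN1⟩ := eventually_atTop.mp hev
  set N0 : ℕ := max N1 1 with hN0def
  have hS : ∀ N, N0 ≤ N → ∑ t ∈ Finset.range N, a t ≤ c' * N := by
    intro N hN
    have h := (hN1 N (le_trans (le_max_left _ _) hN)).le
    have hNne : (N : ℝ≥0∞) ≠ 0 := by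
      have : 1 ≤ N := le_trans (le_max_right _ _) hN
      exact_mod_cast Nat.cast_ne_zero.mpr (by omega)
    have hNtop : (N : ℝ≥0∞) ≠ ∞ := ENNReal.natCast_ne_top N
    calc ∑ t ∈ Finset.range N, a t
        = (N : ℝ≥0∞) * (((N : ℝ≥0∞))⁻¹ * ∑ t ∈ Finset.range N, a t) := by
          rw [← mul_assoc, ENNReal.mul_inv_cancel hNne hNtop, one_mul]
      _ ≤ (N : ℝ≥0∞) * c' := mul_le_mul_right h _
      _ = c' * N := mul_comm _ _
  have hSall : ∀ n : ℕ,
      ∑ t ∈ Finset.range (n + 1), a t ≤ c' * ((N0 : ℝ≥0∞) + ((n : ℝ≥0∞) + 1)) := by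
    intro n
    rcases le_or_gt N0 (n + 1) with h | h
    · calc ∑ t ∈ Finset.range (n + 1), a t ≤ c' * ((n + 1 : ℕ) : ℝ≥0∞) := hS _ h
        _ ≤ c' * ((N0 : ℝ≥0∞) + ((n : ℝ≥0∞) + 1)) := by
            push_cast
            exact mul_le_mul_right le_add_self _
    · calc ∑ t ∈ Finset.range (n + 1), a t
          ≤ ∑ t ∈ Finset.range N0, a t :=
            Finset.sum_le_sum_of_subset (Finset.range_subset_range.mpr h.le)
        _ ≤ c' * N0 := hS _ le_rfl
        _ ≤ c' * ((N0 : ℝ≥0∞) + ((n : ℝ≥0∞) + 1)) := mul_le_mul_right le_self_add _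
  have htend : Tendsto (fun α : ℝ => c' * (N0 : ℝ≥0∞) * ENNReal.ofReal (1 - α))
      (𝓝[Set.Ico (0 : ℝ) 1] 1) (𝓝 0) := by
    have h1 : Tendsto (fun α : ℝ => ENNReal.ofReal (1 - α))
        (𝓝[Set.Ico (0 : ℝ) 1] 1) (𝓝 0) := by
      have h0 : Tendsto (fun α : ℝ => (1 - α)) (𝓝 (1 : ℝ)) (𝓝 0) := by
        have hcont : Continuous fun α : ℝ => 1 - α := by continuity
        simpa using hcont.tendsto (1 : ℝ)
      have := (ENNReal.continuous_ofReal.tendsto 0).comp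
        (h0.mono_left (nhdsWithin_le_nhds (s := Set.Ico (0 : ℝ) 1)))
      simpa [Function.comp_def] using this
    have hne : c' * (N0 : ℝ≥0∞) ≠ ∞ := ENNReal.mul_ne_top hc'top (ENNReal.natCast_ne_top _)
    have := ENNReal.Tendsto.const_mul h1 (Or.inr hne)
    simpa using this
  have hlt : ∀ᶠ α in 𝓝[Set.Ico (0 : ℝ) 1] 1,
      c' * (N0 : ℝ≥0∞) * ENNReal.ofReal (1 - α) < c - c' :=
    htend.eventually_lt_const (tsub_pos_of_lt hc'c)
  have hmem : ∀ᶠ α in 𝓝[Set.Ico (0 : ℝ) 1] 1, α ∈ Set.Ico (0 : ℝ) 1 :=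
    self_mem_nhdsWithin
  have hbound : ∀ᶠ α in 𝓝[Set.Ico (0 : ℝ) 1] 1,
      ENNReal.ofReal (1 - α) * ∑' t : ℕ, ENNReal.ofReal (α ^ t) * a t ≤ c := by
    filter_upwards [hmem, hlt] with α hα hltα
    set r := ENNReal.ofReal α with hrdef
    have hα0 : (0 : ℝ) ≤ α := hα.1
    have hα1 : α < 1 := hα.2
    have hr1 : r < 1 := by rw [hrdef]; exact ENNReal.ofReal_lt_one.mpr hα1
    have hsub : ENNReal.ofReal (1 - α) = 1 - r := by
      rw [hrdef, ENNReal.ofReal_sub 1 hα0, ENNReal.ofReal_one]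
    have h1 : (1 - r) ≠ 0 := by rw [Ne, tsub_eq_zero_iff_le]; exact not_le.mpr hr1
    have h2 : (1 - r) ≠ ∞ := (tsub_le_self.trans_lt ENNReal.one_lt_top).ne
    have hcancel : (1 - r) * (1 - r)⁻¹ = 1 := ENNReal.mul_inv_cancel h1 h2
    have expand : ∀ A B s u : ℝ≥0∞, s * u = 1 →
        s * (s * (A * u + B * (u * u))) = A * s + B := by
      intro A B s u h
      have hx : s * (s * (A * u + B * (u * u)))
          = A * (s * u) * s + B * ((s * u) * (s * u)) := by ring
      rw [hx, h]; ring
    calc ENNReal.ofReal (1 - α) * ∑' t : ℕ, ENNReal.ofReal (α ^ t) * a t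
        = (1 - r) * ∑' t : ℕ, r ^ t * a t := by
          rw [hsub]
          exact congrArg _ (tsum_congr fun t => by rw [hrdef, ENNReal.ofReal_pow hα0])
      _ = (1 - r) * ((1 - r) * ∑' n : ℕ, r ^ n * ∑ t ∈ Finset.range (n + 1), a t) := by
          rw [abel_id r hr1]
      _ ≤ (1 - r) * ((1 - r) *
            ∑' n : ℕ, r ^ n * (c' * ((N0 : ℝ≥0∞) + ((n : ℝ≥0∞) + 1)))) := by
          refine mul_le_mul_right (mul_le_mul_right (ENNReal.tsum_le_tsum fun n => ?_) _) _
          exact mul_le_mul_right (hSall n) _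
      _ = (1 - r) * ((1 - r) *
            ((c' * (N0 : ℝ≥0∞)) * (1 - r)⁻¹ + c' * ((1 - r)⁻¹ * (1 - r)⁻¹))) := by
          have hterm : ∀ n : ℕ, r ^ n * (c' * ((N0 : ℝ≥0∞) + ((n : ℝ≥0∞) + 1)))
              = (c' * (N0 : ℝ≥0∞)) * r ^ n + c' * (r ^ n * ((n : ℝ≥0∞) + 1)) := by
            intro n; ring
          simp_rw [hterm]
          rw [ENNReal.tsum_add, ENNReal.tsum_mul_left, ENNReal.tsum_mul_left,
            ENNReal.tsum_geometric, geom_deriv r hr1]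
      _ = (c' * (N0 : ℝ≥0∞)) * (1 - r) + c' :=
          expand _ _ _ _ hcancel
      _ ≤ (c - c') + c' := by
          refine add_le_add_left ?_ c'
          rw [← hsub]
          exact hltα.le
      _ = c := tsub_add_cancel_of_le hc'c.le
  exact Filter.limsup_le_of_le (by isBoundedDefault) hbound
end
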